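/- For all real x, y and ν ∈ [0,1]: (1/2)·ν·(1−ν)·(x−y)²·min(exp x, exp y) ≤ (1−ν)·exp x + ν·exp y − exp((1−ν)·x + ν·y) ≤ (1/2)·ν·(1−ν)·(x−y)²·max(exp x, exp y). -/

import Mathlib

open Real Set

private lemma hd1 (x y C : ℝ) (ν : ℝ) :
    HasDerivAt (fun ν => (1-ν)*Real.exp x + ν*Real.exp y - Real.exp (x + ν*(y-x)) - C/2*(ν - ν^2))
      (-Real.exp x + Real.exp y - (y-x)*Real.exp (x + ν*(y-x)) - C/2*(1 - 2*ν)) ν := by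
  have h1 : HasDerivAt (fun ν : ℝ => x + ν*(y-x)) (y-x) ν := by
    simpa using ((hasDerivAt_id ν).mul_const (y-x)).const_add x
  have h2 := h1.exp
  have h3 : HasDerivAt (fun ν : ℝ => (1-ν)*Real.exp x + ν*Real.exp y) (-Real.exp x + Real.exp y) ν := by
    have := (((hasDerivAt_id ν).const_sub 1).mul_const (Real.exp x)).add
      ((hasDerivAt_id ν).mul_const (Real.exp y))
    exact this.congr_deriv (by ring)
  have h4 : HasDerivAt (fun ν : ℝ => C/2*(ν - ν^2)) (C/2*(1 - 2*ν)) ν := by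
    have := ((hasDerivAt_id ν).sub (hasDerivAt_pow 2 ν)).const_mul (C/2)
    simpa [mul_comm] using this
  have := (h3.sub h2).sub h4
  exact this.congr_deriv (by ring)

private lemma myDerivEq (x y C : ℝ) :
    deriv (fun ν => (1-ν)*Real.exp x + ν*Real.exp y - Real.exp (x + ν*(y-x)) - C/2*(ν - ν^2))
      = fun ν => -Real.exp x + Real.exp y - (y-x)*Real.exp (x + ν*(y-x)) - C/2*(1 - 2*ν) := by
  funext ν; exact (hd1 x y C ν).deriv

private lemma hd2 (x y C : ℝ) (ν : ℝ) :
    HasDerivAt (fun ν => -Real.exp x + Real.exp y - (y-x)*Real.exp (x + ν*(y-x)) - C/2*(1 - 2*ν))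
      (C - (y-x)^2*Real.exp (x + ν*(y-x))) ν := by
  have h1 : HasDerivAt (fun ν : ℝ => x + ν*(y-x)) (y-x) ν := by
    simpa using ((hasDerivAt_id ν).mul_const (y-x)).const_add x
  have h2 := (h1.exp.const_mul (y-x))
  have h4 : HasDerivAt (fun ν : ℝ => C/2*(1 - 2*ν)) (-C) ν := by
    have := (((hasDerivAt_id ν).const_mul 2).const_sub 1).const_mul (C/2)
    exact this.congr_deriv (by ring)
  have := ((h2.const_sub (-Real.exp x + Real.exp y))).sub h4
  exact this.congr_deriv (by ring)

private lemma myDeriv2Eq (x y C : ℝ) :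
    deriv^[2] (fun ν => (1-ν)*Real.exp x + ν*Real.exp y - Real.exp (x + ν*(y-x)) - C/2*(ν - ν^2))
      = fun ν => C - (y-x)^2*Real.exp (x + ν*(y-x)) := by
  have : deriv^[2] (fun ν => (1-ν)*Real.exp x + ν*Real.exp y - Real.exp (x + ν*(y-x)) - C/2*(ν - ν^2))
      = deriv (deriv (fun ν => (1-ν)*Real.exp x + ν*Real.exp y - Real.exp (x + ν*(y-x)) - C/2*(ν - ν^2))) := rfl
  rw [this, myDerivEq]
  funext ν; exact (hd2 x y C ν).deriv

theorem stmt_7 (x y : ℝ) (ν : ℝ) (hν : ν ∈ Set.Icc (0:ℝ) 1) :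
    1/2 * ν * (1 - ν) * (x - y)^2 * min (Real.exp x) (Real.exp y)
      ≤ (1 - ν) * Real.exp x + ν * Real.exp y - Real.exp ((1 - ν) * x + ν * y) ∧
    (1 - ν) * Real.exp x + ν * Real.exp y - Real.exp ((1 - ν) * x + ν * y)
      ≤ 1/2 * ν * (1 - ν) * (x - y)^2 * max (Real.exp x) (Real.exp y) := by
  obtain ⟨hν0, hν1⟩ := hν
  have hdiff : ∀ C : ℝ, DifferentiableOn ℝ
      (fun ν => (1-ν)*Real.exp x + ν*Real.exp y - Real.exp (x + ν*(y-x)) - C/2*(ν - ν^2))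
      (Set.Icc (0:ℝ) 1) := fun C =>
    fun t _ => (hd1 x y C t).differentiableAt.differentiableWithinAt
  have hdiff2 : ∀ C : ℝ, DifferentiableOn ℝ
      (deriv (fun ν => (1-ν)*Real.exp x + ν*Real.exp y - Real.exp (x + ν*(y-x)) - C/2*(ν - ν^2)))
      (Set.Icc (0:ℝ) 1) := by
    intro C
    rw [myDerivEq]
    exact fun t _ => (hd2 x y C t).differentiableAt.differentiableWithinAt
  have hrange : ∀ t ∈ Set.Icc (0:ℝ) 1,
      min x y ≤ x + t*(y-x) ∧ x + t*(y-x) ≤ max x y := by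
    intro t ⟨ht0, ht1⟩
    rcases le_total x y with h | h
    · rw [min_eq_left h, max_eq_right h]; constructor <;> nlinarith
    · rw [min_eq_right h, max_eq_left h]; constructor <;> nlinarith
  have hmin : min (Real.exp x) (Real.exp y) = Real.exp (min x y) :=
    (Real.exp_monotone.map_min).symm
  have hmax : max (Real.exp x) (Real.exp y) = Real.exp (max x y) :=
    (Real.exp_monotone.map_max).symm
  have hcomb : (1 - ν) * x + ν * y = x + ν*(y-x) := by ring
  -- lower bound
  constructor
  · set C := (x-y)^2 * min (Real.exp x) (Real.exp y) with hC
    have hconc : ConcaveOn ℝ (Set.Icc (0:ℝ) 1)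
        (fun ν => (1-ν)*Real.exp x + ν*Real.exp y - Real.exp (x + ν*(y-x)) - C/2*(ν - ν^2)) := by
      apply concaveOn_of_deriv2_nonpos' (convex_Icc 0 1) (hdiff C) (hdiff2 C)
      intro t ht
      rw [myDeriv2Eq]
      have h1 := (hrange t ht).1
      have h2 : Real.exp (min x y) ≤ Real.exp (x + t*(y-x)) := Real.exp_le_exp.mpr h1
      show C - (y-x)^2 * Real.exp (x + t*(y-x)) ≤ 0
      rw [hC, hmin]
      nlinarith [mul_le_mul_of_nonneg_left h2 (sq_nonneg (x-y))]
    have h0 : (fun ν => (1-ν)*Real.exp x + ν*Real.exp y - Real.exp (x + ν*(y-x)) - C/2*(ν - ν^2)) 0 = 0 := by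
      simp
    have h1 : (fun ν => (1-ν)*Real.exp x + ν*Real.exp y - Real.exp (x + ν*(y-x)) - C/2*(ν - ν^2)) 1 = 0 := by
      norm_num
    have key := hconc.2 (Set.left_mem_Icc.mpr zero_le_one) (Set.right_mem_Icc.mpr zero_le_one)
      (by linarith : (0:ℝ) ≤ 1 - ν) hν0 (by ring)
    simp only [h0, h1, smul_eq_mul, smul_zero, mul_zero, add_zero, zero_add, mul_one] at key
    rw [hcomb]
    nlinarith [key]
  · set C := (x-y)^2 * max (Real.exp x) (Real.exp y) with hC
    have hconv : ConvexOn ℝ (Set.Icc (0:ℝ) 1)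
        (fun ν => (1-ν)*Real.exp x + ν*Real.exp y - Real.exp (x + ν*(y-x)) - C/2*(ν - ν^2)) := by
      apply convexOn_of_deriv2_nonneg' (convex_Icc 0 1) (hdiff C) (hdiff2 C)
      intro t ht
      rw [myDeriv2Eq]
      have h1 := (hrange t ht).2
      have h2 : Real.exp (x + t*(y-x)) ≤ Real.exp (max x y) := Real.exp_le_exp.mpr h1
      show 0 ≤ C - (y-x)^2 * Real.exp (x + t*(y-x))
      rw [hC, hmax]
      nlinarith [mul_le_mul_of_nonneg_left h2 (sq_nonneg (x-y))]
    have h0 : (fun ν => (1-ν)*Real.exp x + ν*Real.exp y - Real.exp (x + ν*(y-x)) - C/2*(ν - ν^2)) 0 = 0 := by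
      simp
    have h1 : (fun ν => (1-ν)*Real.exp x + ν*Real.exp y - Real.exp (x + ν*(y-x)) - C/2*(ν - ν^2)) 1 = 0 := by
      norm_num
    have key := hconv.2 (Set.left_mem_Icc.mpr zero_le_one) (Set.right_mem_Icc.mpr zero_le_one)
      (by linarith : (0:ℝ) ≤ 1 - ν) hν0 (by ring)
    simp only [h0, h1, smul_eq_mul, smul_zero, mul_zero, add_zero, zero_add, mul_one] at key
    rw [hcomb]
    nlinarith [key]
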